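/- Let A ∈ ℤ^{d×n} of rank d whose columns span a strongly convex cone, and suppose (1,…,1) is not in the rational rowspan of A. Let B ∈ ℤ^{(n+1)×(n-d)} be a Gale dual of ρ(A) (its columns form a basis of ker_ℤ(ρ(A))) with rows b₀,…,bₙ. Then b₀ ≠ 0, and for any σ ⊂ {1,…,n} of cardinality d+1 such that {b_i : i ∉ σ} is linearly independent, there exist w ∈ ℝ_{>0}ⁿ and positive reals λ_i (i ∉ σ) with Σ_{i=1}^{n} w_i b_i = Σ_{i ∉ σ} λ_i b_i; in particular (0,w)·B lies in the interior of the cone K_σ = {Σ_{i∉σ} λ_i b_i : λ_i ≥ 0}. -/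

import Mathlib

/-- clear denominators -/
lemma exists_int_scale {m : ℕ} (c : Fin m → ℚ) :
    ∃ (N : ℤ) (c' : Fin m → ℤ), N ≠ 0 ∧ ∀ k, (c' k : ℚ) = N * c k := by
  classical
  refine ⟨∏ k, ((c k).den : ℤ), ?_⟩
  have hdvd : ∀ k : Fin m, ((c k).den : ℤ) ∣ ∏ k, ((c k).den : ℤ) :=
    fun k => Finset.dvd_prod_of_mem _ (Finset.mem_univ k)
  choose t ht using hdvd
  refine ⟨fun k => t k * (c k).num, ?_, ?_⟩
  · refine Finset.prod_ne_zero_iff.2 fun k _ => ?_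
    exact_mod_cast (c k).den_nz
  · intro k
    have h1 : ((∏ j, ((c j).den : ℤ) : ℤ) : ℚ) = ((c k).den : ℚ) * (t k : ℚ) := by
      rw [ht k]; push_cast; ring
    have hden : ((c k).den : ℚ) ≠ 0 := by exact_mod_cast (c k).den_nz
    have h2 : c k * ((c k).den : ℚ) = ((c k).num : ℚ) := by
      have hq := Rat.num_div_den (c k)
      rw [div_eq_iff hden] at hq
      exact hq.symm
    calc ((t k * (c k).num : ℤ) : ℚ) = (t k : ℚ) * ((c k).num : ℚ) := by push_cast; ring
    _ = (t k : ℚ) * (c k * ((c k).den : ℚ)) := by rw [h2]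
    _ = (((c k).den : ℚ) * (t k : ℚ)) * c k := by ring
    _ = ((∏ j, ((c j).den : ℤ) : ℤ) : ℚ) * c k := by rw [← h1]


lemma indQ {p q : ℕ} (M : Matrix (Fin p) (Fin q) ℤ)
    (hind : ∀ c : Fin q → ℤ, (∀ i, ∑ k, M i k * c k = 0) → c = 0) :
    ∀ c : Fin q → ℚ, (∀ i, ∑ k, (M i k : ℚ) * c k = 0) → c = 0 := by
  intro c hc
  obtain ⟨N, c', hN, hc'⟩ := exists_int_scale c
  have h0 : c' = 0 := by
    apply hind
    intro i
    have : ((∑ k, M i k * c' k : ℤ) : ℚ) = 0 := by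
      push_cast
      rw [show (∑ k, (M i k : ℚ) * (c' k : ℚ)) = ∑ k, (M i k : ℚ) * ((N : ℚ) * c k) from
        Finset.sum_congr rfl fun k _ => by rw [← hc' k]]
      rw [show (∑ k, (M i k : ℚ) * ((N : ℚ) * c k)) = (N : ℚ) * ∑ k, (M i k : ℚ) * c k by
        rw [Finset.mul_sum]; exact Finset.sum_congr rfl fun k _ => by ring]
      rw [hc i, mul_zero]
    exact_mod_cast this
  funext k
  have := hc' k
  rw [h0] at this
  simp only [Pi.zero_apply, Int.cast_zero] at this
  have hNQ : (N : ℚ) ≠ 0 := Int.cast_ne_zero.2 hN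
  have := this.symm
  rcases mul_eq_zero.1 this with h | h
  · exact absurd h hNQ
  · simpa using h

lemma spanRows {p q : ℕ} (M : Matrix (Fin p) (Fin q) ℤ)
    (hind : ∀ c : Fin q → ℤ, (∀ i, ∑ k, M i k * c k = 0) → c = 0) :
    ∃ Y : Fin q → Fin p → ℚ, ∀ k k', ∑ i, Y k i * (M i k' : ℚ) = if k' = k then 1 else 0 := by
  classical
  set Mq : Matrix (Fin p) (Fin q) ℚ := M.map ((↑) : ℤ → ℚ) with hMq
  have hker : LinearMap.ker Mq.mulVecLin = ⊥ := by
    rw [LinearMap.ker_eq_bot']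
    intro c hc
    apply indQ M hind
    intro i
    have := congrFun hc i
    simpa [Matrix.mulVecLin, Matrix.mulVec, dotProduct, hMq] using this
  have hrank : Mq.rank = q := by
    rw [Matrix.rank, LinearMap.finrank_range_of_inj (LinearMap.ker_eq_bot.1 hker)]
    simp
  have hspan : Submodule.span ℚ (Set.range Mq) = ⊤ := by
    apply Submodule.eq_top_of_finrank_eq
    change Module.finrank ℚ (Submodule.span ℚ (Set.range Mq.row)) = _
    rw [← Matrix.rank_eq_finrank_span_row, hrank]
    simp [Module.finrank_pi]
  have hmem : ∀ k : Fin q, (Pi.single k 1 : Fin q → ℚ) ∈ Submodule.span ℚ (Set.range Mq) := by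
    intro k; rw [hspan]; trivial
  have := fun k => (Submodule.mem_span_range_iff_exists_fun ℚ).1 (hmem k)
  choose Y hY using this
  refine ⟨Y, fun k k' => ?_⟩
  have := congrFun (hY k) k'
  simpa [Finset.sum_apply, Pi.single_apply, hMq, Matrix.map_apply, smul_eq_mul] using this



/-- The homogenization `ρ(A)` of `A`: a column of zeros is attached to the left of `A`
and a row of ones on top. -/
def rhoA {d n : ℕ} (A : Matrix (Fin d) (Fin n) ℤ) : Matrix (Fin (d + 1)) (Fin (n + 1)) ℤ :=
  Matrix.of (Fin.cons (fun _ => (1 : ℤ)) (fun i' => Fin.cons (0 : ℤ) (A i')))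

/-- Let `A` be of rank `d` with columns spanning a strongly convex cone, and suppose
`(1,…,1)` is not in the rational rowspan of `A`.  Let `B` be a Gale dual of `ρ(A)`
(its columns form a `ℤ`-basis of `ker_ℤ(ρ(A))`) with rows `b₀,…,bₙ`.  Then `b₀ ≠ 0`,
and for any `σ ⊂ {1,…,n}` of cardinality `d+1` with `{bᵢ : i ∉ σ}` linearly
independent, there exist `w ∈ ℝ_{>0}ⁿ` and positive `λᵢ` (`i ∉ σ`) with
`Σᵢ wᵢ bᵢ = Σ_{i∉σ} λᵢ bᵢ`; in particular `(0,w)·B` lies in the interior of the cone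
`K_σ`. -/
theorem stmt9 (d n : ℕ) (A : Matrix (Fin d) (Fin n) ℤ)
    (hrank : (A.map ((↑) : ℤ → ℚ)).rank = d)
    (hconv : ∃ h : Fin d → ℝ, ∀ j, 0 < ∑ i, h i * (A i j : ℝ))
    (hrow : ¬ ∃ c : Fin d → ℚ, ∀ j, ∑ i, c i * (A i j : ℚ) = 1)
    (B : Matrix (Fin (n + 1)) (Fin (n - d)) ℤ)
    (hker : ∀ u : Fin (n + 1) → ℤ, (rhoA A).mulVec u = 0 ↔
      ∃ c : Fin (n - d) → ℤ, u = fun i => ∑ k, B i k * c k)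
    (hindB : ∀ c : Fin (n - d) → ℤ, (∀ i, ∑ k, B i k * c k = 0) → c = 0) :
    (∃ k, B 0 k ≠ 0) ∧
    ∀ σ : Finset (Fin n), σ.card = d + 1 →
      LinearIndependent ℝ (fun i : {i : Fin n // i ∉ σ} => fun k => (B i.1.succ k : ℝ)) →
      ∃ w : Fin n → ℝ, (∀ i, 0 < w i) ∧
        ∃ lam : Fin n → ℝ, (∀ i ∉ σ, 0 < lam i) ∧
          ∀ k, ∑ i, w i * (B i.succ k : ℝ) = ∑ i ∈ σᶜ, lam i * (B i.succ k : ℝ) := by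
  classical
  refine ⟨?_, ?_⟩
  ·
    classical
    by_contra hb0
    push_neg at hb0
    -- every rational kernel vector of A has coordinate sum zero
    have hker1 : ∀ v : Fin n → ℚ, (∀ r, ∑ j, (A r j : ℚ) * v j = 0) → ∑ j, v j = 0 := by
      intro v hv
      obtain ⟨N, v', hN, hv'⟩ := exists_int_scale v
      have hint : ∀ r, ∑ j, A r j * v' j = 0 := by
        intro r
        have : ((∑ j, A r j * v' j : ℤ) : ℚ) = 0 := by
          push_cast
          calc ∑ j, (A r j : ℚ) * (v' j : ℚ) = ∑ j, (N : ℚ) * ((A r j : ℚ) * v j) := by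
                refine Finset.sum_congr rfl fun j _ => ?_
                rw [hv' j]; ring
          _ = (N : ℚ) * ∑ j, (A r j : ℚ) * v j := by rw [Finset.mul_sum]
          _ = 0 := by rw [hv r, mul_zero]
        exact_mod_cast this
      set u : Fin (n + 1) → ℤ := Fin.cons (-(∑ j, v' j)) v' with hu
      have hmu : (rhoA A).mulVec u = 0 := by
        funext r
        refine Fin.cases ?_ ?_ r
        · show ∑ i, rhoA A 0 i * u i = 0
          have : ∀ i, rhoA A 0 i = 1 := fun i => by simp [rhoA]
          simp only [this, one_mul]
          rw [Fin.sum_univ_succ]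
          simp [hu]
        · intro r'
          show ∑ i, rhoA A r'.succ i * u i = 0
          rw [Fin.sum_univ_succ]
          have h0 : rhoA A r'.succ 0 = 0 := by simp [rhoA]
          have hs : ∀ j, rhoA A r'.succ j.succ = A r' j := fun j => by simp [rhoA]
          simp only [h0, zero_mul, zero_add, hs]
          have : ∀ j : Fin n, u j.succ = v' j := fun j => by simp [hu]
          simp only [this]
          exact hint r'
      obtain ⟨c, hc⟩ := (hker u).1 hmu
      have hu0 : u 0 = 0 := by
        have := congrFun hc 0
        rw [this]
        exact Finset.sum_eq_zero fun k _ => by rw [hb0 k, zero_mul]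
      have hsv' : ∑ j, v' j = 0 := by
        have : u 0 = -(∑ j, v' j) := by simp [hu]
        rw [this] at hu0; linarith
      have : ((∑ j, v' j : ℤ) : ℚ) = 0 := by exact_mod_cast hsv'
      push_cast at this
      have h2 : ∑ j, (v' j : ℚ) = (N : ℚ) * ∑ j, v j := by
        rw [Finset.mul_sum]; exact Finset.sum_congr rfl fun j _ => hv' j
      rw [h2] at this
      have hNQ : (N : ℚ) ≠ 0 := Int.cast_ne_zero.2 hN
      exact (mul_eq_zero.1 this).resolve_left hNQ
    -- the all-ones functional vanishes on the kernel, hence lies in the row span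
    set Aq : Matrix (Fin d) (Fin n) ℚ := A.map ((↑) : ℤ → ℚ) with hAq
    set L : Fin d → ((Fin n → ℚ) →ₗ[ℚ] ℚ) :=
      fun r => LinearMap.proj r ∘ₗ Aq.mulVecLin with hL
    set K : (Fin n → ℚ) →ₗ[ℚ] ℚ := ∑ j, LinearMap.proj j with hK
    have hle : ⨅ r, LinearMap.ker (L r) ≤ LinearMap.ker K := by
      intro v hv
      rw [Submodule.mem_iInf] at hv
      have hv' : ∀ r, ∑ j, (A r j : ℚ) * v j = 0 := by
        intro r
        have := hv r
        rw [LinearMap.mem_ker] at this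
        simpa [hL, Matrix.mulVecLin, Matrix.mulVec, dotProduct, hAq] using this
      rw [LinearMap.mem_ker]
      have : K v = ∑ j, v j := by simp [hK]
      rw [this]
      exact hker1 v hv'
    have hmem := mem_span_of_iInf_ker_le_ker hle
    obtain ⟨c, hc⟩ := (Submodule.mem_span_range_iff_exists_fun ℚ).1 hmem
    refine hrow ⟨c, fun j => ?_⟩
    have := LinearMap.congr_fun hc (Pi.single j 1)
    simp only [LinearMap.coe_sum, Finset.sum_apply, LinearMap.smul_apply, smul_eq_mul] at this
    have hLval : ∀ r, L r (Pi.single j 1) = (A r j : ℚ) := by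
      intro r
      simp [hL, Matrix.mulVecLin, Matrix.mulVec, dotProduct, hAq, Pi.single_apply,
        Finset.sum_ite_eq, mul_comm]
    have hKval : K (Pi.single j 1) = 1 := by
      simp [hK, Pi.single_apply]
    calc ∑ i, c i * (A i j : ℚ) = ∑ i, c i * L i (Pi.single j 1) := by
          exact Finset.sum_congr rfl fun r _ => by rw [hLval r]
    _ = K (Pi.single j 1) := this
    _ = 1 := hKval
  ·
    classical
    intro σ hcard hLI
    set b : Fin (n + 1) → (Fin (n - d) → ℝ) := fun i k => (B i k : ℝ) with hb
    -- integer column relations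
    have colker : ∀ (k : Fin (n - d)) (r : Fin (d + 1)), ∑ i, rhoA A r i * B i k = 0 := by
      intro k r
      have hcol : (rhoA A).mulVec (fun i => B i k) = 0 := by
        refine (hker _).2 ⟨Pi.single k 1, ?_⟩
        funext i
        simp [Pi.single_apply, mul_ite]
      have := congrFun hcol r
      simpa [Matrix.mulVec, dotProduct] using this
    -- real consequences
    have hArow : ∀ (r : Fin d) (k : Fin (n - d)), ∑ j, (A r j : ℝ) * b j.succ k = 0 := by
      intro r k
      have h := colker k r.succ
      rw [Fin.sum_univ_succ] at h
      have h0 : rhoA A r.succ 0 = 0 := by simp [rhoA]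
      have hs : ∀ j : Fin n, rhoA A r.succ j.succ = A r j := fun j => by simp [rhoA]
      rw [h0, zero_mul, zero_add] at h
      simp only [hs] at h
      have : ((∑ j, A r j * B j.succ k : ℤ) : ℝ) = 0 := by rw [h]; simp
      push_cast at this
      simpa [hb] using this
    have hsumb : ∀ k, b 0 k + ∑ j : Fin n, b j.succ k = 0 := by
      intro k
      have h := colker k 0
      have h1 : ∀ i : Fin (n + 1), rhoA A 0 i = 1 := fun i => by simp [rhoA]
      simp only [h1, one_mul] at h
      rw [Fin.sum_univ_succ] at h
      have : ((B 0 k + ∑ j : Fin n, B j.succ k : ℤ) : ℝ) = 0 := by rw [h]; simp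
      push_cast at this
      simpa [hb] using this
    -- strong convexity: nonneg real kernel vectors vanish
    have posker : ∀ v : Fin n → ℝ, (∀ r, ∑ j, (A r j : ℝ) * v j = 0) → (∀ j, 0 ≤ v j) →
        ∀ j, v j = 0 := by
      intro v hrel hpos
      obtain ⟨h, hh⟩ := hconv
      have hzero : ∑ j, v j * (∑ r, h r * (A r j : ℝ)) = 0 := by
        calc ∑ j, v j * (∑ r, h r * (A r j : ℝ))
            = ∑ j, ∑ r, h r * ((A r j : ℝ) * v j) := by
              refine Finset.sum_congr rfl fun j _ => ?_
              rw [Finset.mul_sum]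
              exact Finset.sum_congr rfl fun r _ => by ring
        _ = ∑ r, h r * (∑ j, (A r j : ℝ) * v j) := by
              rw [Finset.sum_comm]
              exact Finset.sum_congr rfl fun r _ => by rw [Finset.mul_sum]
        _ = 0 := Finset.sum_eq_zero fun r _ => by rw [hrel r, mul_zero]
      have hterm : ∀ j ∈ Finset.univ, v j * (∑ r, h r * (A r j : ℝ)) = 0 := by
        rw [← Finset.sum_eq_zero_iff_of_nonneg]
        · exact hzero
        · exact fun j _ => mul_nonneg (hpos j) (le_of_lt (hh j))
      intro j
      have := hterm j (Finset.mem_univ j)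
      rcases mul_eq_zero.1 this with h' | h'
      · exact h'
      · exact absurd h' (ne_of_gt (hh j))
    -- spanning of rows over ℚ, cast to ℝ
    obtain ⟨Y, hY⟩ := spanRows B hindB
    have hsingle : ∀ k, (∑ i, (Y k i : ℝ) • b i) = Pi.single k 1 := by
      intro k
      funext k'
      have hq := hY k k'
      have : ((∑ i, Y k i * (B i k' : ℚ) : ℚ) : ℝ) = if k' = k then 1 else 0 := by
        rw [hq]; split <;> norm_num
      push_cast at this
      simp only [Finset.sum_apply, Pi.smul_apply, smul_eq_mul, hb]
      rw [Pi.single_apply]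
      convert this using 2
    -- any functional nonneg on the bᵢ (i ≥ 1) vanishes
    have hvanish : ∀ ψ : (Fin (n - d) → ℝ) →ₗ[ℝ] ℝ, (∀ j : Fin n, 0 ≤ ψ (b j.succ)) → ψ = 0 := by
      intro ψ hψ
      have hrel : ∀ r, ∑ j, (A r j : ℝ) * ψ (b j.succ) = 0 := by
        intro r
        have : ∑ j, (A r j : ℝ) * ψ (b j.succ) = ψ (∑ j, (A r j : ℝ) • b j.succ) := by
          rw [map_sum]
          exact Finset.sum_congr rfl fun j _ => by rw [map_smul]; rfl
        rw [this]
        have hz : (∑ j, (A r j : ℝ) • b j.succ) = 0 := by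
          funext k
          simp only [Finset.sum_apply, Pi.smul_apply, smul_eq_mul, Pi.zero_apply]
          exact hArow r k
        rw [hz, map_zero]
      have hzero : ∀ j : Fin n, ψ (b j.succ) = 0 := posker _ hrel hψ
      have hb0 : ψ (b 0) = 0 := by
        have hsum : b 0 = -∑ j : Fin n, b j.succ := by
          funext k
          have := hsumb k
          simp only [Finset.sum_apply, Pi.neg_apply]
          linarith
        rw [hsum, map_neg, map_sum]
        simp [hzero]
      have hall : ∀ i : Fin (n + 1), ψ (b i) = 0 := by
        intro i
        refine Fin.cases hb0 hzero i
      have hone : ∀ k, ψ (Pi.single k 1) = 0 := by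
        intro k
        rw [← hsingle k, map_sum]
        refine Finset.sum_eq_zero fun i _ => ?_
        rw [map_smul, hall i, smul_zero]
      refine LinearMap.ext fun v => ?_
      show ψ v = 0
      have hv : v = ∑ k, v k • (Pi.single k 1 : Fin (n - d) → ℝ) := by
        funext k'
        simp [Pi.single_apply, Finset.sum_apply]
      rw [hv, map_sum]
      simp only [map_smul, hone, smul_zero, Finset.sum_const_zero]
    -- the span S of the rows off σ
    set S : Submodule ℝ (Fin (n - d) → ℝ) :=
      Submodule.span ℝ (Set.range (fun i : {i : Fin n // i ∉ σ} => b i.1.succ)) with hS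
    have hdn : d + 1 ≤ n := by
      have := Finset.card_le_univ σ
      rw [hcard] at this
      simpa using this
    have hcardc : Fintype.card {i : Fin n // i ∉ σ} = n - (d + 1) := by
      have h1 : Fintype.card {i : Fin n // i ∉ σ} =
          Fintype.card (Fin n) - Fintype.card {i : Fin n // i ∈ σ} :=
        Fintype.card_subtype_compl _
      rw [h1, Fintype.card_fin, Fintype.card_coe, hcard]
    have hfinS : Module.finrank ℝ S = n - (d + 1) := by
      rw [hS, finrank_span_eq_card hLI, hcardc]
    have hfinV : Module.finrank ℝ (Fin (n - d) → ℝ) = n - d := by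
      simp
    have hSne : S ≠ ⊤ := by
      intro hScon
      have := hfinS
      rw [hScon, finrank_top, hfinV] at this
      omega
    obtain ⟨x, hx⟩ : ∃ x, x ∉ S := by
      by_contra hcon
      push_neg at hcon
      exact hSne (Submodule.eq_top_iff'.2 hcon)
    have hxq : (Submodule.Quotient.mk x : (Fin (n - d) → ℝ) ⧸ S) ≠ 0 := by
      simpa [Submodule.Quotient.mk_eq_zero] using hx
    obtain ⟨ψq, hψq⟩ : ∃ ψq : Module.Dual ℝ ((Fin (n - d) → ℝ) ⧸ S),
        ψq (Submodule.Quotient.mk x) ≠ 0 := by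
      by_contra hcon
      push_neg at hcon
      exact hxq ((Module.forall_dual_apply_eq_zero_iff ℝ _).1 hcon)
    set φ : (Fin (n - d) → ℝ) →ₗ[ℝ] ℝ := ψq ∘ₗ S.mkQ with hφ
    have hSker : S ≤ LinearMap.ker φ := by
      intro s hs
      rw [LinearMap.mem_ker, hφ, LinearMap.comp_apply]
      have : S.mkQ s = 0 := (Submodule.Quotient.mk_eq_zero S).2 hs
      rw [this, map_zero]
    have hφx : φ x ≠ 0 := hψq
    have hφne : φ ≠ 0 := fun h => hφx (by rw [h]; rfl)
    have hrange : LinearMap.range φ = ⊤ := by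
      rw [LinearMap.range_eq_top]
      intro z
      exact ⟨(z / φ x) • x, by rw [map_smul, smul_eq_mul, div_mul_cancel₀ _ hφx]⟩
    have hfker : Module.finrank ℝ (LinearMap.ker φ) = n - (d + 1) := by
      have h1 := LinearMap.finrank_range_add_finrank_ker φ
      rw [hrange, finrank_top, Module.finrank_self, hfinV] at h1
      omega
    have hker_eq : LinearMap.ker φ = S := by
      symm
      exact Submodule.eq_of_le_of_finrank_le hSker (by rw [hfker, hfinS])
    -- signs of t
    set t : Fin n → ℝ := fun j => φ (b j.succ) with ht
    have htzero : ∀ j ∉ σ, t j = 0 := by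
      intro j hj
      exact hSker (Submodule.subset_span ⟨⟨j, hj⟩, rfl⟩)
    have hexpos : ∃ j, 0 < t j := by
      by_contra hcon
      push_neg at hcon
      have : (-φ) = 0 := hvanish (-φ) (fun j => by
        simp only [LinearMap.neg_apply]
        have := hcon j
        rw [ht] at this
        linarith [hcon j])
      exact hφne (by rwa [neg_eq_zero] at this)
    have hexneg : ∃ j, t j < 0 := by
      by_contra hcon
      push_neg at hcon
      exact hφne (hvanish φ (fun j => hcon j))
    obtain ⟨jp, hjp⟩ := hexpos
    obtain ⟨jn, hjn⟩ := hexneg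
    set P : ℝ := ∑ j, max (t j) 0 with hPdef
    set Nn : ℝ := ∑ j, max (-t j) 0 with hNdef
    have hP : 0 < P :=
      Finset.sum_pos' (fun j _ => le_max_right _ _)
        ⟨jp, Finset.mem_univ jp, lt_max_iff.2 (Or.inl hjp)⟩
    have hN : 0 < Nn :=
      Finset.sum_pos' (fun j _ => le_max_right _ _)
        ⟨jn, Finset.mem_univ jn, lt_max_iff.2 (Or.inl (by linarith))⟩
    set w0 : Fin n → ℝ := fun j => if 0 < t j then Nn else if t j < 0 then P else 1 with hw0def
    have hw0 : ∀ j, 0 < w0 j := by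
      intro j
      rw [hw0def]
      dsimp only
      split
      · exact hN
      · split
        · exact hP
        · exact one_pos
    have hpoint : ∀ j, w0 j * t j = Nn * max (t j) 0 - P * max (-t j) 0 := by
      intro j
      rw [hw0def]
      dsimp only
      rcases lt_trichotomy (t j) 0 with h | h | h
      · rw [if_neg (by linarith), if_pos h, max_eq_right h.le,
          max_eq_left (by linarith : (0:ℝ) ≤ -t j)]
        ring
      · rw [h]
        simp
      · rw [if_pos h, max_eq_left h.le, max_eq_right (by linarith : -t j ≤ 0)]
        ring
    have hwt : ∑ j, w0 j * t j = 0 := by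
      rw [Finset.sum_congr rfl (fun j _ => hpoint j), Finset.sum_sub_distrib,
        ← Finset.mul_sum, ← Finset.mul_sum, ← hPdef, ← hNdef]
      ring
    set y : Fin (n - d) → ℝ := ∑ j ∈ σ, w0 j • b j.succ with hy
    have hφy : φ y = 0 := by
      rw [hy, map_sum]
      simp only [map_smul, smul_eq_mul]
      rw [show ∑ j ∈ σ, w0 j * φ (b j.succ) = ∑ j ∈ σ, w0 j * t j from rfl]
      rw [Finset.sum_subset (Finset.subset_univ σ)
        (fun j _ hj => by rw [htzero j hj, mul_zero])]
      exact hwt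
    have hyS : y ∈ S := by
      rw [← hker_eq]
      exact LinearMap.mem_ker.2 hφy
    rw [hS] at hyS
    obtain ⟨μ, hμ⟩ := (Submodule.mem_span_range_iff_exists_fun ℝ).1 hyS
    set μ' : Fin n → ℝ := fun i => if h : i ∈ σ then 0 else μ ⟨i, h⟩ with hμ'
    refine ⟨fun i => if i ∈ σ then w0 i else 1 + |μ' i|, ?_, fun i => μ' i + (1 + |μ' i|), ?_, ?_⟩
    · intro i
      show 0 < if i ∈ σ then w0 i else 1 + |μ' i|
      split
      · exact hw0 i
      · positivity
    · intro i _
      show 0 < μ' i + (1 + |μ' i|)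
      have h1 := neg_abs_le (μ' i)
      linarith
    · intro k
      rw [← Finset.sum_add_sum_compl σ]
      have hL1 : ∑ i ∈ σ, (if i ∈ σ then w0 i else 1 + |μ' i|) * (B i.succ k : ℝ)
          = ∑ i ∈ σ, w0 i * (B i.succ k : ℝ) :=
        Finset.sum_congr rfl fun i hi => by rw [if_pos hi]
      have hL2 : ∑ i ∈ σᶜ, (if i ∈ σ then w0 i else 1 + |μ' i|) * (B i.succ k : ℝ)
          = ∑ i ∈ σᶜ, (1 + |μ' i|) * (B i.succ k : ℝ) :=
        Finset.sum_congr rfl fun i hi => by rw [if_neg (Finset.mem_compl.1 hi)]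
      have hyk : ∑ i ∈ σ, w0 i * (B i.succ k : ℝ) = y k := by
        rw [hy]
        simp only [Finset.sum_apply, Pi.smul_apply, smul_eq_mul]
        rfl
      have hyk2 : y k = ∑ i ∈ σᶜ, μ' i * (B i.succ k : ℝ) := by
        have h1 := congrFun hμ k
        simp only [Finset.sum_apply, Pi.smul_apply, smul_eq_mul] at h1
        rw [← h1]
        rw [Finset.sum_subtype σᶜ (fun i => Finset.mem_compl) 
          (fun i => μ' i * (B i.succ k : ℝ))]
        refine Finset.sum_congr rfl fun i _ => ?_
        rw [hμ']
        dsimp only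
        rw [dif_neg i.2]
      have hR : ∑ i ∈ σᶜ, (μ' i + (1 + |μ' i|)) * (B i.succ k : ℝ)
          = ∑ i ∈ σᶜ, μ' i * (B i.succ k : ℝ) + ∑ i ∈ σᶜ, (1 + |μ' i|) * (B i.succ k : ℝ) := by
        rw [← Finset.sum_add_distrib]
        exact Finset.sum_congr rfl fun i _ => by ring
      rw [hL1, hL2, hyk, hyk2, hR]
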